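/- Let Q be a semi-Eulerian poset of rank r+1 and let s = ⌊r/2⌋. Then ĝ(Q,x) + (x-1)ĥ(Q,x) = x^{r+1} ĝ(Q,1/x) + Σ*_{k=r-s+1}^{r+1} (-1)^{r-k} binom(r+1,k) e_Q(0̂,1̂) x^k, where Σ* means that if r is odd there is an extra summand ½·(-1)^{r-k} binom(r+1,k) e_Q(0̂,1̂) x^k for k = r-s, and e_Q(0̂,1̂) = μ_Q(0̂,1̂) - (-1)^{r+1}. -/

import Mathlib

open Finset Polynomial

variable {α : Type*} [Fintype α] [PartialOrder α] [BoundedOrder α] [DecidableEq α]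
  [DecidableRel ((· ≤ ·) : α → α → Prop)] [DecidableRel ((· < ·) : α → α → Prop)]

/-- `ρ` is a rank function making `α` a graded poset of rank `d + 1`. -/
def IsGraded (ρ : α → ℕ) (d : ℕ) : Prop :=
  ρ ⊥ = 0 ∧ ρ ⊤ = d + 1 ∧ (∀ a b : α, a ⋖ b → ρ b = ρ a + 1) ∧
    ∀ a b : α, a < b → ρ a < ρ b

/-- `mu` is the Möbius function of the poset `α`. -/
def IsMobius (mu : α → α → ℤ) : Prop :=
  (∀ a : α, mu a a = 1) ∧
    ∀ a b : α, a < b → ∑ c ∈ Finset.univ.filter (fun c => a ≤ c ∧ c ≤ b), mu a c = 0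

/-- `hh q` and `g q` are the toric polynomials `ĥ([0̂,q], x)` and `ĝ([0̂,q], x)` of the lower
intervals, defined by Stanley's recursion.  Writing `ĥ([0̂,q],x) = ĥ_r + ĥ_{r-1} x + ⋯ + ĥ_0 x^r`
with `r = ρ(q) - 1`, the polynomial `ĝ` has coefficients `ĝ_k = ĥ_{r-k} - ĥ_{r-k+1}` for
`k ≤ ⌊r/2⌋` and `0` above. -/
def ToricPair (ρ : α → ℕ) (hh g : α → Polynomial ℤ) : Prop :=
  hh ⊥ = 1 ∧ g ⊥ = 1 ∧
  (∀ q : α, q ≠ ⊥ →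
    hh q = ∑ p ∈ Finset.univ.filter (· < q), g p * (X - 1) ^ (ρ q - 1 - ρ p)) ∧
  (∀ q : α, q ≠ ⊥ →
    (g q).coeff 0 = (hh q).coeff 0 ∧
    (∀ k, 1 ≤ k → k ≤ (ρ q - 1) / 2 → (g q).coeff k = (hh q).coeff k - (hh q).coeff (k - 1)) ∧
    (∀ k, (ρ q - 1) / 2 < k → (g q).coeff k = 0))

private lemma SE_neg_one_pow_congr {a b : ℕ} (h : a % 2 = b % 2) : (-1:ℤ)^a = (-1)^b := by
  have key : ∀ n : ℕ, (-1:ℤ)^n = (-1)^(n % 2) := by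
    intro n
    conv_lhs => rw [← Nat.div_add_mod n 2]
    rw [pow_add, pow_mul, neg_one_sq, one_pow, one_mul]
  rw [key a, key b, h]

private lemma SE_hsq (n : ℕ) : (-1:ℤ)^n * (-1)^n = 1 := by
  rw [← pow_add]; exact Even.neg_one_pow ⟨n, rfl⟩

private lemma SE_reflect_sum {ι : Type*} (s : Finset ι) (f : ι → Polynomial ℤ) (N : ℕ) :
    reflect N (∑ i ∈ s, f i) = ∑ i ∈ s, reflect N (f i) := by
  classical
  induction s using Finset.induction_on with
  | empty => simp [reflect_zero]
  | insert _ _ h ih => rw [Finset.sum_insert h, Finset.sum_insert h, reflect_add, ih]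

private lemma SE_X_sub_one_natDegree_le : ((X : Polynomial ℤ) - 1).natDegree ≤ 1 := by
  have h : ((X : Polynomial ℤ) - 1) = X - C 1 := by rw [map_one]
  rw [h, natDegree_X_sub_C]

private lemma SE_pow_natDegree_le (n : ℕ) : (((X : Polynomial ℤ) - 1)^n).natDegree ≤ n := by
  calc (((X : Polynomial ℤ) - 1)^n).natDegree ≤ n * ((X : Polynomial ℤ) - 1).natDegree :=
        natDegree_pow_le
  _ ≤ n * 1 := Nat.mul_le_mul_left n SE_X_sub_one_natDegree_le
  _ = n := mul_one n

private lemma SE_reflect_one_X_sub_one : reflect 1 ((X : Polynomial ℤ) - 1) = 1 - X := by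
  have h : ((X : Polynomial ℤ) - 1) = X^1 + C (-1) := by
    rw [pow_one, map_neg, map_one]; ring
  rw [h, reflect_add, reflect_monomial, reflect_C]
  have h1 : revAt 1 1 = 0 := revAt_le (le_refl 1)
  rw [h1, pow_zero, map_neg, map_one]
  ring

private lemma SE_reflect_X_sub_one_pow (n : ℕ) :
    reflect n (((X : Polynomial ℤ) - 1)^n) = (1 - X)^n := by
  induction n with
  | zero => rw [pow_zero, pow_zero, ← C_1, reflect_C, pow_zero, mul_one]
  | succ n ih =>
    rw [pow_succ, reflect_mul _ _ (SE_pow_natDegree_le n) SE_X_sub_one_natDegree_le, ih,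
      SE_reflect_one_X_sub_one, pow_succ]

private lemma SE_key (m : ℕ) (H G : Polynomial ℤ) (ε : ℤ)
    (hdeg : H.natDegree ≤ m)
    (hsym : H - reflect m H = C ((-1)^m * ε) * (X - 1)^m)
    (hg0 : G.coeff 0 = H.coeff 0)
    (hgk : ∀ k, 1 ≤ k → k ≤ m / 2 → G.coeff k = H.coeff k - H.coeff (k-1))
    (hgtop : ∀ k, m / 2 < k → G.coeff k = 0) :
    G + (X - 1) * H
      = reflect (m + 1) G
        + ∑ k ∈ Finset.Icc (m - m / 2 + 1) (m + 1),
            C ((-1:ℤ)^(m+k) * ((m+1).choose k : ℤ) * ε) * X ^ k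
        + (if Odd m then
            C ((-1:ℤ)^(m/2) * (m.choose (m/2) : ℤ) * ε) * X ^ (m - m/2)
          else 0) := by
  have hsq : ∀ n : ℕ, (-1:ℤ)^n * (-1)^n = 1 := fun n => by
    rw [← pow_add]; exact Even.neg_one_pow ⟨n, rfl⟩
  have hH0 : ∀ k, m < k → H.coeff k = 0 := fun k hk =>
    coeff_eq_zero_of_natDegree_lt (lt_of_le_of_lt hdeg hk)
  have hcoef : ∀ k, k ≤ m →
      H.coeff k - H.coeff (m - k) = (-1:ℤ)^k * (m.choose k : ℤ) * ε := by
    intro k hk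
    have h := congrArg (fun p : Polynomial ℤ => p.coeff k) hsym
    simp only [coeff_sub, coeff_reflect, revAt_le hk, coeff_C_mul] at h
    have hbin : ((X - 1 : Polynomial ℤ)^m).coeff k = (-1:ℤ)^(m-k) * (m.choose k : ℤ) := by
      have hx : (X - 1 : Polynomial ℤ) = X + C (-1) := by rw [map_neg, map_one]; ring
      rw [hx, coeff_X_add_C_pow]
    rw [hbin] at h
    have hmk : (-1:ℤ)^(m-k) = (-1)^m * (-1)^k := by
      rw [SE_neg_one_pow_congr (show (m-k) % 2 = (m+k) % 2 by omega), pow_add]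
    rw [hmk] at h
    linear_combination h + ((-1:ℤ)^k * (m.choose k : ℤ) * ε) * (hsq m)
  have heps : m % 2 = 0 → ε = 0 := by
    intro hm
    have h2 : m / 2 ≤ m := Nat.div_le_self m 2
    have h := hcoef (m/2) h2
    rw [show m - m/2 = m/2 by omega, sub_self] at h
    rcases mul_eq_zero.mp h.symm with h3 | h3
    · rcases mul_eq_zero.mp h3 with h4 | h4
      · exact absurd h4 (pow_ne_zero _ (by norm_num))
      · exact absurd h4 (Int.natCast_ne_zero.mpr (Nat.choose_pos h2).ne')
    · exact h3
  have hpw : ∀ a b : ℕ, (m % 2 = 1 → a % 2 = b % 2) → (-1:ℤ)^a * ε = (-1)^b * ε := by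
    intro a b hab
    rcases Nat.even_or_odd m with hm | hm
    · rw [heps (Nat.even_iff.mp hm)]; ring
    · rw [SE_neg_one_pow_congr (hab (Nat.odd_iff.mp hm))]
  have hodd : ∀ j : ℕ,
      (if Odd m then C ((-1:ℤ)^(m/2) * (m.choose (m/2) : ℤ) * ε) * X ^ (m - m/2)
        else 0).coeff j
      = if Odd m ∧ j = m - m/2 then (-1:ℤ)^(m/2) * (m.choose (m/2) : ℤ) * ε else 0 := by
    intro j
    by_cases h : Odd m
    · rw [if_pos h, coeff_C_mul_X_pow]
      simp [h]
    · simp [h]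
  apply Polynomial.ext
  intro k
  have hsum : (∑ j ∈ Finset.Icc (m - m/2 + 1) (m+1),
        C ((-1:ℤ)^(m+j) * ((m+1).choose j : ℤ) * ε) * X^j).coeff k
      = if k ∈ Finset.Icc (m - m/2 + 1) (m+1)
        then (-1:ℤ)^(m+k) * ((m+1).choose k : ℤ) * ε else 0 := by
    rw [finset_sum_coeff]
    rw [Finset.sum_congr rfl (fun j _ => coeff_C_mul_X_pow _ _ _)]
    exact Finset.sum_ite_eq (Finset.Icc _ _) k _
  have hXH : ((X - 1) * H).coeff k = (X * H).coeff k - H.coeff k := by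
    rw [sub_mul, one_mul, coeff_sub]
  simp only [coeff_add]
  rw [hsum, hodd k, coeff_reflect, hXH]
  cases k with
  | zero =>
    rw [mul_coeff_zero, coeff_X_zero, zero_mul]
    have h1 : revAt (m+1) 0 = m + 1 := by rw [revAt_le (Nat.zero_le _)]; omega
    rw [h1, hgtop (m+1) (by omega), hg0]
    rw [if_neg (by rw [Finset.mem_Icc]; omega)]
    rw [if_neg (by rintro ⟨h2, h3⟩; have := Nat.odd_iff.mp h2; omega)]
    ring
  | succ k =>
    rw [coeff_X_mul]
    by_cases hk : k ≤ m
    · have h1 : revAt (m+1) (k+1) = m - k := by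
        rw [revAt_le (by omega)]; omega
      rw [h1]
      rcases le_or_gt (k+1) (m/2) with hA | hA
      · rw [hgk (k+1) (by omega) hA, hgtop (m-k) (by omega), Nat.add_sub_cancel]
        rw [if_neg (by rw [Finset.mem_Icc]; omega)]
        rw [if_neg (by rintro ⟨h2, h3⟩; have := Nat.odd_iff.mp h2; omega)]
        ring
      · have hGk1 : G.coeff (k+1) = 0 := hgtop _ hA
        rcases lt_or_ge k (m - m/2) with hB | hC
        · have hm1 : m % 2 = 1 := by omega
          have hk2 : k = m/2 := by omega
          subst hk2
          rw [hGk1, hgtop (m - m/2) (by omega)]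
          rw [if_neg (by rw [Finset.mem_Icc]; omega)]
          rw [if_pos ⟨Nat.odd_iff.mpr hm1, by omega⟩]
          have h := hcoef (m/2 + 1) (by omega)
          rw [show m - (m/2+1) = m/2 by omega] at h
          have hch : (m.choose (m/2 + 1) : ℤ) = (m.choose (m/2) : ℤ) := by
            rw [show m/2 + 1 = m - m/2 by omega]
            exact_mod_cast congrArg (Nat.cast : ℕ → ℤ) (Nat.choose_symm (Nat.div_le_self m 2))
          rw [hch] at h
          linear_combination -h
        · rw [hGk1, if_pos (by rw [Finset.mem_Icc]; omega)]
          rw [if_neg (by rintro ⟨h2, h3⟩; omega)]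
          rcases eq_or_lt_of_le hk with hkm | hkm
          · subst hkm
            rw [hH0 (k+1) (by omega), show k - k = 0 by omega, hg0]
            have h1 := hcoef k le_rfl
            rw [show k - k = 0 by omega, Nat.choose_self] at h1
            have h2 := hpw k (k + (k+1)) (by omega)
            rw [Nat.choose_self]
            push_cast at h1 ⊢
            linear_combination h1 + h2
          · rw [hgk (m-k) (by omega) (by omega)]
            have h1 := hcoef k hk
            have h2 := hcoef (k+1) (by omega)
            rw [show m - (k+1) = m - k - 1 by omega] at h2
            have h3 := hpw k (m + (k+1)) (by omega)
            have hp : ((m+1).choose (k+1) : ℤ) = (m.choose k : ℤ) + (m.choose (k+1) : ℤ) := by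
              exact_mod_cast congrArg (Nat.cast : ℕ → ℤ) (Nat.choose_succ_succ m k)
            rw [hp]
            linear_combination h1 - h2 + ((m.choose k : ℤ) + (m.choose (k+1) : ℤ)) * h3
    · have h1 : revAt (m+1) (k+1) = k+1 := revAt_eq_self_of_lt (by omega)
      rw [h1, hgtop (k+1) (by omega), hH0 k (by omega), hH0 (k+1) (by omega)]
      rw [if_neg (by rw [Finset.mem_Icc]; omega)]
      rw [if_neg (by rintro ⟨h2, h3⟩; omega)]
      ring

theorem semi_eulerian_toric_identity (r : ℕ) (ρ : α → ℕ) (mu : α → α → ℤ)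
    (hh g : α → Polynomial ℤ)
    (hgr : IsGraded ρ r) (hmu : IsMobius mu) (htoric : ToricPair ρ hh g)
    (hsemi : ∀ a b : α, a ≤ b → ¬(a = ⊥ ∧ b = ⊤) → mu a b = (-1 : ℤ) ^ (ρ b - ρ a)) :
    g ⊤ + (X - 1) * hh ⊤
      = Polynomial.reflect (r + 1) (g ⊤)
        + ∑ k ∈ Finset.Icc (r - r / 2 + 1) (r + 1),
            Polynomial.C ((-1 : ℤ) ^ (r + k) * ((r + 1).choose k : ℤ)
              * (mu ⊥ ⊤ - (-1 : ℤ) ^ (r + 1))) * X ^ k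
        + (if Odd r then
            Polynomial.C ((-1 : ℤ) ^ (r / 2) * (r.choose (r / 2) : ℤ)
              * (mu ⊥ ⊤ - (-1 : ℤ) ^ (r + 1))) * X ^ (r - r / 2)
          else 0) := by
  classical
  obtain ⟨hb0, ht0, -, hlt⟩ := hgr
  obtain ⟨-, hmus⟩ := hmu
  obtain ⟨hhb, hgb, hrec, hgc⟩ := htoric
  have hle : ∀ {a b : α}, a ≤ b → ρ a ≤ ρ b := by
    intro a b hab
    rcases lt_or_eq_of_le hab with h | h
    · exact (hlt _ _ h).le
    · rw [h]
  have hbot1 : ∀ {q : α}, q ≠ ⊥ → 1 ≤ ρ q := by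
    intro q hq
    have := hlt ⊥ q (Ne.bot_lt hq)
    omega
  have hnetop : (⊥ : α) ≠ ⊤ := by
    intro h
    have h2 : ρ (⊥ : α) = ρ (⊤ : α) := by rw [h]
    rw [hb0, ht0] at h2; omega
  have hbotlttop : (⊥ : α) < ⊤ := lt_of_le_of_ne bot_le hnetop
  have hX1ne : (1 - X : Polynomial ℤ) ≠ 0 := by
    intro h
    have h2 := congrArg (fun p : Polynomial ℤ => p.coeff 1) h
    simp [coeff_sub, coeff_one, coeff_X] at h2
  -- degree bounds
  have hgdeg : ∀ q : α, (g q).natDegree ≤ (ρ q - 1) / 2 := by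
    intro q
    by_cases hq : q = ⊥
    · subst hq; rw [hgb]; simp
    · exact natDegree_le_iff_coeff_eq_zero.mpr (fun N hN => (hgc q hq).2.2 N hN)
  have hgdeg' : ∀ q : α, (g q).natDegree ≤ ρ q := fun q => le_trans (hgdeg q) (by omega)
  have hhdeg : ∀ q : α, q ≠ ⊥ → (hh q).natDegree ≤ ρ q - 1 := by
    intro q hq
    rw [hrec q hq]
    apply natDegree_sum_le_of_forall_le
    intro p hp
    have hpq : p < q := (Finset.mem_filter.mp hp).2
    have h1 := hlt p q hpq
    calc (g p * (X-1)^(ρ q - 1 - ρ p)).natDegree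
        ≤ (g p).natDegree + (((X:Polynomial ℤ)-1)^(ρ q - 1 - ρ p)).natDegree := natDegree_mul_le
      _ ≤ (ρ p - 1)/2 + (ρ q - 1 - ρ p) := Nat.add_le_add (hgdeg p) (SE_pow_natDegree_le _)
      _ ≤ ρ q - 1 := by omega
  -- finset splittings
  have hqnotmem : ∀ q : α, q ∉ univ.filter (· < q) := by
    intro q h
    exact absurd (Finset.mem_filter.mp h).2 (lt_irrefl q)
  have hsplit : ∀ q : α, univ.filter (· ≤ q) = insert q (univ.filter (· < q)) := by
    intro q
    ext c
    simp only [Finset.mem_filter, Finset.mem_insert, Finset.mem_univ, true_and]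
    constructor
    · intro h
      rcases eq_or_lt_of_le h with h | h
      · exact Or.inl h
      · exact Or.inr h
    · rintro (rfl | h)
      · exact le_rfl
      · exact h.le
  have hqnotmem2 : ∀ u q : α, q ∉ univ.filter (fun c => u ≤ c ∧ c < q) := by
    intro u q h
    exact absurd (Finset.mem_filter.mp h).2.2 (lt_irrefl q)
  have hsplit2 : ∀ u q : α, u ≤ q →
      univ.filter (fun c => u ≤ c ∧ c ≤ q) = insert q (univ.filter (fun c => u ≤ c ∧ c < q)) := by
    intro u q huq
    ext c
    simp only [Finset.mem_filter, Finset.mem_insert, Finset.mem_univ, true_and]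
    constructor
    · rintro ⟨h1, h2⟩
      rcases eq_or_lt_of_le h2 with h | h
      · exact Or.inl h
      · exact Or.inr ⟨h1, h⟩
    · rintro (rfl | ⟨h1, h2⟩)
      · exact ⟨huq, le_rfl⟩
      · exact ⟨h1, h2.le⟩
  -- Möbius sums
  have hmob : ∀ u q : α, u < q → ¬(u = ⊥ ∧ q = ⊤) →
      ∑ p ∈ univ.filter (fun p => u ≤ p ∧ p < q), (-1:ℤ)^(ρ q - ρ p) = -1 := by
    intro u q huq hex
    have h0 := hmus u q huq
    have h1 : ∀ c ∈ univ.filter (fun c => u ≤ c ∧ c ≤ q), mu u c = (-1:ℤ)^(ρ c - ρ u) := by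
      intro c hc
      obtain ⟨-, h2, h3⟩ := Finset.mem_filter.mp hc
      refine hsemi u c h2 ?_
      rintro ⟨rfl, rfl⟩
      exact hex ⟨rfl, top_le_iff.mp h3⟩
    rw [Finset.sum_congr rfl h1, hsplit2 u q huq.le,
      Finset.sum_insert (hqnotmem2 u q)] at h0
    have h4 : ∀ c ∈ univ.filter (fun c => u ≤ c ∧ c < q),
        (-1:ℤ)^(ρ q - ρ c) = (-1)^(ρ q - ρ u) * (-1)^(ρ c - ρ u) := by
      intro c hc
      obtain ⟨-, h5, h6⟩ := Finset.mem_filter.mp hc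
      have l1 : ρ u ≤ ρ c := hle h5
      have l2 : ρ c ≤ ρ q := hle h6.le
      have l3 : ρ u ≤ ρ q := le_trans l1 l2
      rw [SE_neg_one_pow_congr
        (show (ρ q - ρ c) % 2 = ((ρ q - ρ u) + (ρ c - ρ u)) % 2 by omega), pow_add]
    rw [Finset.sum_congr rfl h4, ← Finset.mul_sum]
    have h7 : ∑ c ∈ univ.filter (fun c => u ≤ c ∧ c < q), (-1:ℤ)^(ρ c - ρ u)
        = -(-1:ℤ)^(ρ q - ρ u) := by linarith [h0]
    rw [h7]
    have h8 := SE_hsq (ρ q - ρ u)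
    linear_combination -h8
  have hmobtop : ∑ p ∈ univ.filter (fun p => (⊥:α) ≤ p ∧ p < ⊤), (-1:ℤ)^(ρ (⊤:α) - ρ p)
      = -1 - (-1:ℤ)^(r+1) * (mu ⊥ ⊤ - (-1)^(r+1)) := by
    have h0 := hmus ⊥ ⊤ hbotlttop
    rw [hsplit2 ⊥ ⊤ le_top, Finset.sum_insert (hqnotmem2 ⊥ ⊤)] at h0
    have h1 : ∀ c ∈ univ.filter (fun c => (⊥:α) ≤ c ∧ c < ⊤), mu ⊥ c = (-1:ℤ)^(ρ c) := by
      intro c hc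
      obtain ⟨-, -, h3⟩ := Finset.mem_filter.mp hc
      rw [hsemi ⊥ c bot_le (by rintro ⟨-, rfl⟩; exact absurd h3 (lt_irrefl _)), hb0,
        Nat.sub_zero]
    rw [Finset.sum_congr rfl h1] at h0
    have h4 : ∀ c ∈ univ.filter (fun c => (⊥:α) ≤ c ∧ c < ⊤),
        (-1:ℤ)^(ρ (⊤:α) - ρ c) = (-1)^(r+1) * (-1)^(ρ c) := by
      intro c hc
      have l2 : ρ c ≤ ρ (⊤:α) := hle le_top
      have l3 : ρ (⊤:α) = r + 1 := ht0
      rw [SE_neg_one_pow_congr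
        (show (ρ (⊤:α) - ρ c) % 2 = ((r+1) + ρ c) % 2 by omega), pow_add]
    rw [Finset.sum_congr rfl h4, ← Finset.mul_sum]
    have h7 : ∑ c ∈ univ.filter (fun c => (⊥:α) ≤ c ∧ c < ⊤), (-1:ℤ)^(ρ c) = - mu ⊥ ⊤ := by
      linarith [h0]
    rw [h7]
    have h8 := SE_hsq (r+1)
    linear_combination -h8
  -- reflected recursion
  have hreflrec : ∀ q : α, q ≠ ⊥ →
      reflect (ρ q - 1) (hh q)
        = ∑ p ∈ univ.filter (· < q), reflect (ρ p) (g p) * (1 - X)^(ρ q - 1 - ρ p) := by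
    intro q hq
    rw [hrec q hq, SE_reflect_sum]
    refine Finset.sum_congr rfl ?_
    intro p hp
    have hpq : p < q := (Finset.mem_filter.mp hp).2
    have h1 := hlt p q hpq
    set d := ρ q - 1 - ρ p with hd
    rw [show ρ q - 1 = ρ p + d by omega]
    rw [reflect_mul _ _ (hgdeg' p) (SE_pow_natDegree_le d), SE_reflect_X_sub_one_pow]
  -- generic sum over p < q equals (X-1) * hh q
  have hSgen : ∀ q : α, q ≠ ⊥ →
      ∑ u ∈ univ.filter (· < q), g u * (X-1)^(ρ q - ρ u) = (X-1) * hh q := by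
    intro q hq
    rw [hrec q hq, Finset.mul_sum]
    refine Finset.sum_congr rfl ?_
    intro u hu
    have h1 := hlt u q (Finset.mem_filter.mp hu).2
    rw [show ρ q - ρ u = (ρ q - 1 - ρ u) + 1 by omega, pow_succ]
    ring
  -- the core double-sum computation
  have hcore : ∀ q : α, q ≠ ⊥ →
      (∀ p : α, p < q →
        ∑ u ∈ univ.filter (· ≤ p), g u * (X-1)^(ρ p - ρ u) = reflect (ρ p) (g p)) →
      (1 - X) * reflect (ρ q - 1) (hh q)
        = ∑ u ∈ univ.filter (· < q),
            C (∑ p ∈ univ.filter (fun p => u ≤ p ∧ p < q), (-1:ℤ)^(ρ q - ρ p))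
              * (g u * (X-1)^(ρ q - ρ u)) := by
    intro q hq IH
    rw [hreflrec q hq, Finset.mul_sum]
    calc ∑ p ∈ univ.filter (· < q), (1-X) * (reflect (ρ p) (g p) * (1 - X)^(ρ q - 1 - ρ p))
        = ∑ p ∈ univ.filter (· < q), reflect (ρ p) (g p) * (1 - X)^(ρ q - ρ p) := by
          refine Finset.sum_congr rfl ?_
          intro p hp
          have h1 := hlt p q (Finset.mem_filter.mp hp).2
          rw [show ρ q - ρ p = (ρ q - 1 - ρ p) + 1 by omega, pow_succ]
          ring
      _ = ∑ p ∈ univ.filter (· < q),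
            (∑ u ∈ univ.filter (· ≤ p), g u * (X-1)^(ρ p - ρ u)) * (1 - X)^(ρ q - ρ p) := by
          refine Finset.sum_congr rfl ?_
          intro p hp
          rw [IH p (Finset.mem_filter.mp hp).2]
      _ = ∑ p ∈ univ.filter (· < q), ∑ u ∈ univ.filter (· ≤ p),
            g u * (X-1)^(ρ p - ρ u) * (1 - X)^(ρ q - ρ p) := by
          refine Finset.sum_congr rfl ?_
          intro p hp
          rw [Finset.sum_mul]
      _ = ∑ u ∈ univ.filter (· < q), ∑ p ∈ univ.filter (fun p => u ≤ p ∧ p < q),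
            g u * (X-1)^(ρ p - ρ u) * (1 - X)^(ρ q - ρ p) := by
          refine Finset.sum_comm' ?_
          intro p u
          simp only [Finset.mem_filter, Finset.mem_univ, true_and]
          constructor
          · rintro ⟨h1, h2⟩
            exact ⟨⟨h2, h1⟩, lt_of_le_of_lt h2 h1⟩
          · rintro ⟨⟨h1, h2⟩, h3⟩
            exact ⟨h2, h1⟩
      _ = ∑ u ∈ univ.filter (· < q),
            C (∑ p ∈ univ.filter (fun p => u ≤ p ∧ p < q), (-1:ℤ)^(ρ q - ρ p))
              * (g u * (X-1)^(ρ q - ρ u)) := by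
          refine Finset.sum_congr rfl ?_
          intro u hu
          rw [map_sum, Finset.sum_mul]
          refine Finset.sum_congr rfl ?_
          intro p hp
          obtain ⟨-, h1, h2⟩ := Finset.mem_filter.mp hp
          have l1 : ρ u ≤ ρ p := hle h1
          have l2 : ρ p ≤ ρ q := (hlt p q h2).le
          rw [show ((1:Polynomial ℤ) - X) = -(X - 1) by ring, neg_pow]
          rw [show ρ q - ρ u = (ρ p - ρ u) + (ρ q - ρ p) by omega, pow_add]
          simp only [map_pow, map_neg, map_one]
          ring
  -- base case
  have hbase : ∑ u ∈ univ.filter (· ≤ (⊥:α)), g u * (X-1)^(ρ (⊥:α) - ρ u)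
      = reflect (ρ (⊥:α)) (g ⊥) := by
    have hset : univ.filter (· ≤ (⊥:α)) = {⊥} := by
      ext c
      simp [le_bot_iff]
    rw [hset, Finset.sum_singleton, Nat.sub_self, pow_zero, mul_one, hgb, hb0]
    rw [show (1 : Polynomial ℤ) = C 1 from (map_one C).symm, reflect_C, pow_zero, mul_one]
  -- main induction : Dehn--Sommerville below the top
  have hmain : ∀ n : ℕ, ∀ q : α, ρ q ≤ n → q ≠ ⊤ →
      ∑ u ∈ univ.filter (· ≤ q), g u * (X-1)^(ρ q - ρ u) = reflect (ρ q) (g q) := by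
    intro n
    induction n with
    | zero =>
      intro q hq0 _
      have hqb : q = ⊥ := by
        by_contra h
        have := hbot1 h
        omega
      subst hqb
      exact hbase
    | succ n ih =>
      intro q hq hqt
      by_cases hqb : q = ⊥
      · subst hqb; exact hbase
      · have IH : ∀ p : α, p < q →
            ∑ u ∈ univ.filter (· ≤ p), g u * (X-1)^(ρ p - ρ u) = reflect (ρ p) (g p) := by
          intro p hp
          exact ih p (by have := hlt p q hp; omega) (ne_top_of_lt (lt_of_lt_of_le hp le_top))
        have hc := hcore q hqb IH
        have hcc : ∀ u ∈ univ.filter (· < q),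
            C (∑ p ∈ univ.filter (fun p => u ≤ p ∧ p < q), (-1:ℤ)^(ρ q - ρ p))
              * (g u * (X-1)^(ρ q - ρ u))
            = -(g u * (X-1)^(ρ q - ρ u)) := by
          intro u hu
          rw [hmob u q (Finset.mem_filter.mp hu).2 (fun h => hqt h.2), map_neg, map_one]
          ring
        rw [Finset.sum_congr rfl hcc, Finset.sum_neg_distrib, hSgen q hqb] at hc
        have hc2 : (1 - X) * reflect (ρ q - 1) (hh q) = (1 - X) * hh q := by
          rw [hc]; ring
        have hrefl : reflect (ρ q - 1) (hh q) = hh q := mul_left_cancel₀ hX1ne hc2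
        obtain ⟨hgc0, hgc1, hgc2⟩ := hgc q hqb
        have hkey := SE_key (ρ q - 1) (hh q) (g q) 0 (hhdeg q hqb)
          (by rw [hrefl]; simp) hgc0 hgc1 hgc2
        simp only [mul_zero, map_zero, zero_mul, Finset.sum_const_zero, add_zero,
          ite_self] at hkey
        rw [show ρ q - 1 + 1 = ρ q by have := hbot1 hqb; omega] at hkey
        rw [hsplit q, Finset.sum_insert (hqnotmem q), Nat.sub_self, pow_zero, mul_one,
          hSgen q hqb, hkey]
  -- top computation
  have IHtop : ∀ p : α, p < ⊤ →
      ∑ u ∈ univ.filter (· ≤ p), g u * (X-1)^(ρ p - ρ u) = reflect (ρ p) (g p) :=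
    fun p hp => hmain (ρ p) p le_rfl (ne_top_of_lt hp)
  have htne : (⊤ : α) ≠ ⊥ := fun h => hnetop h.symm
  have hct := hcore ⊤ htne IHtop
  have hcc2 : ∀ u ∈ univ.filter (· < (⊤:α)),
      C (∑ p ∈ univ.filter (fun p => u ≤ p ∧ p < ⊤), (-1:ℤ)^(ρ (⊤:α) - ρ p))
        * (g u * (X-1)^(ρ (⊤:α) - ρ u))
      = -(g u * (X-1)^(ρ (⊤:α) - ρ u))
        + (if u = ⊥ then
            C (-(-1:ℤ)^(r+1) * (mu ⊥ ⊤ - (-1)^(r+1))) * (X-1)^(r+1) else 0) := by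
    intro u hu
    have hu2 : u < ⊤ := (Finset.mem_filter.mp hu).2
    by_cases hub : u = ⊥
    · subst hub
      rw [if_pos rfl, hmobtop, hgb, hb0, ht0]
      simp only [map_sub, map_neg, map_mul, map_one, map_pow, Nat.sub_zero]
      ring
    · rw [if_neg hub, hmob u ⊤ hu2 (fun h => hub h.1), map_neg, map_one]
      ring
  rw [Finset.sum_congr rfl hcc2, Finset.sum_add_distrib, Finset.sum_neg_distrib,
    hSgen ⊤ htne] at hct
  have hbmem : (⊥:α) ∈ univ.filter (· < (⊤:α)) := by
    simp [hbotlttop]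
  have hsingle : ∑ u ∈ univ.filter (· < (⊤:α)),
      (if u = ⊥ then C (-(-1:ℤ)^(r+1) * (mu ⊥ ⊤ - (-1)^(r+1))) * (X-1)^(r+1) else 0)
      = C (-(-1:ℤ)^(r+1) * (mu ⊥ ⊤ - (-1)^(r+1))) * (X-1)^(r+1) := by
    rw [Finset.sum_ite_eq' (univ.filter (· < (⊤:α))) ⊥
      (fun _ => C (-(-1:ℤ)^(r+1) * (mu ⊥ ⊤ - (-1)^(r+1))) * (X-1)^(r+1)), if_pos hbmem]
  rw [hsingle] at hct
  have hrt : ρ (⊤:α) - 1 = r := by rw [ht0]; omega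
  rw [hrt] at hct
  -- derive the symmetry-with-error identity at the top
  have hsymtop : hh ⊤ - reflect r (hh ⊤)
      = C ((-1:ℤ)^r * (mu ⊥ ⊤ - (-1)^(r+1))) * (X-1)^r := by
    have h2 : (1-X) * reflect r (hh ⊤)
        = (1-X) * (hh ⊤ - C ((-1:ℤ)^r * (mu ⊥ ⊤ - (-1)^(r+1))) * (X-1)^r) := by
      rw [hct, pow_succ]
      simp only [map_sub, map_neg, map_mul, map_one, map_pow]
      ring
    have h3 := mul_left_cancel₀ hX1ne h2
    rw [h3]
    ring
  obtain ⟨hgc0, hgc1, hgc2⟩ := hgc ⊤ htne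
  rw [ht0] at hgc1 hgc2
  simp only [Nat.add_sub_cancel] at hgc1 hgc2
  have hhd : (hh ⊤).natDegree ≤ r := by
    have := hhdeg ⊤ htne
    rw [ht0] at this
    simpa using this
  exact SE_key r (hh ⊤) (g ⊤) (mu ⊥ ⊤ - (-1:ℤ)^(r+1)) hhd hsymtop hgc0 hgc1 hgc2
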